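/- Let A be a preference matrix, π_ref a full-support distribution, τ > 0, and let μ* be the unique Nash equilibrium of the τ-KL-regularized game J_τ(π₁,π₂,π_ref) = π₁ᵀAπ₂ − 1/2 − τKL(π₁‖π_ref) + τKL(π₂‖π_ref). Consider the mirror descent iterates μ^{k+1} = Prox(μ^k, η F(μ^k)) where F(μ) = Aμ − τ(log(μ/π_ref) + 1) and Prox uses KL divergence. If 0 < η ≤ τ/(τ² + 1/2), then for every k ≥ 1, KL(μ*‖μ^{k+1}) ≤ (1 − ητ/2)·KL(μ*‖μ^k). -/

import Mathlib

open Finset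

set_option maxHeartbeats 1000000

section MDAux

/-- φ(t) = log t - 3(t-1)(t+5)/(2(t+2)^2) is monotone on (0,∞). -/
lemma md_aux_phi_mono :
    MonotoneOn (fun t : ℝ => Real.log t - 3*(t-1)*(t+5)/(2*(t+2)^2)) (Set.Ioi 0) := by
  have hder : ∀ x ∈ interior (Set.Ioi (0:ℝ)),
      HasDerivAt (fun t : ℝ => Real.log t - 3*(t-1)*(t+5)/(2*(t+2)^2))
        (1/x - 27/(x+2)^3) x := by
    intro x hx
    rw [interior_Ioi] at hx
    have hx0 : (0:ℝ) < x := hx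
    have hx2 : (2*(x+2)^2 : ℝ) ≠ 0 := by positivity
    have h1 : HasDerivAt Real.log x⁻¹ x := Real.hasDerivAt_log hx0.ne'
    have hnum : HasDerivAt (fun t : ℝ => 3*(t-1)*(t+5)) (3*1*(x+5) + 3*(x-1)*1) x := by
      exact (((hasDerivAt_id x).sub_const 1).const_mul 3).mul ((hasDerivAt_id x).add_const 5)
    have hden : HasDerivAt (fun t : ℝ => 2*(t+2)^2) (2*(2*(x+2)^1*1)) x := by
      exact (((hasDerivAt_id x).add_const 2).pow 2).const_mul 2
    have := h1.sub (hnum.div hden hx2)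
    refine this.congr_deriv ?_
    have hx2' : (x+2 : ℝ) ≠ 0 := by positivity
    field_simp
    ring
  have hcont : ContinuousOn (fun t : ℝ => Real.log t - 3*(t-1)*(t+5)/(2*(t+2)^2)) (Set.Ioi 0) := by
    intro x hx
    exact (hder x (by rwa [interior_Ioi])).continuousAt.continuousWithinAt
  refine monotoneOn_of_hasDerivWithinAt_nonneg (convex_Ioi 0) hcont
    (fun x hx => (hder x hx).hasDerivWithinAt) ?_
  intro x hx
  rw [interior_Ioi] at hx
  have hx0 : (0:ℝ) < x := hx
  have key : 27 * x ≤ (x+2)^3 := by nlinarith [sq_nonneg (x-1), mul_nonneg (sq_nonneg (x-1)) hx0.le]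
  have h1 : 27/(x+2)^3 ≤ 1/x := by
    rw [div_le_div_iff₀ (by positivity) hx0]
    nlinarith
  linarith

/-- g(t) = t log t - t + 1 - 3(t-1)^2/(2(t+2)) has derivative φ(t) on (0,∞). -/
lemma md_aux_g_deriv {x : ℝ} (hx0 : 0 < x) :
    HasDerivAt (fun t : ℝ => t * Real.log t - t + 1 - 3*(t-1)^2/(2*(t+2)))
      (Real.log x - 3*(x-1)*(x+5)/(2*(x+2)^2)) x := by
  have hx2 : (2*(x+2) : ℝ) ≠ 0 := by positivity
  have h1 : HasDerivAt (fun t : ℝ => t * Real.log t) (1 * Real.log x + x * x⁻¹) x :=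
    (hasDerivAt_id x).mul (Real.hasDerivAt_log hx0.ne')
  have hnum : HasDerivAt (fun t : ℝ => 3*(t-1)^2) (3*(2*(x-1)^1*1)) x :=
    (((hasDerivAt_id x).sub_const 1).pow 2).const_mul 3
  have hden : HasDerivAt (fun t : ℝ => 2*(t+2)) (2*1) x :=
    ((hasDerivAt_id x).add_const 2).const_mul 2
  have := ((h1.sub_const 1).add_const 1).sub (hnum.div hden hx2)
  have h2 : HasDerivAt (fun t : ℝ => t * Real.log t - t + 1 - 3*(t-1)^2/(2*(t+2)))
      ((1 * Real.log x + x * x⁻¹ - 1) - (3*(2*(x-1)^1*1) * (2*(x+2)) - 3*(x-1)^2 * (2*1))/(2*(x+2))^2) x := by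
    have h3 : HasDerivAt (fun t : ℝ => t * Real.log t - t) (1 * Real.log x + x * x⁻¹ - 1) x :=
      h1.sub (hasDerivAt_id x)
    exact (h3.add_const 1).sub (hnum.div hden hx2)
  convert h2 using 1
  have hx2' : (x+2:ℝ) ≠ 0 := by positivity
  field_simp
  ring

/-- Core scalar inequality: 3(t-1)²/(2(t+2)) ≤ t log t - t + 1 for t > 0. -/
lemma md_core_ineq {t : ℝ} (ht : 0 < t) :
    3*(t-1)^2/(2*(t+2)) ≤ t * Real.log t - t + 1 := by
  set g : ℝ → ℝ := fun t => t * Real.log t - t + 1 - 3*(t-1)^2/(2*(t+2)) with hg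
  have hg1 : g 1 = 0 := by simp [hg, Real.log_one]
  have hphi1 : Real.log 1 - 3*(1-1)*(1+5)/(2*(1+2)^2) = 0 := by simp [Real.log_one]
  suffices h : 0 ≤ g t by
    simp only [hg] at h; linarith
  rcases le_total 1 t with h1t | ht1
  · -- monotone on Ici 1
    have hmono : MonotoneOn g (Set.Ici 1) := by
      refine monotoneOn_of_hasDerivWithinAt_nonneg (f' := fun x => Real.log x - 3*(x-1)*(x+5)/(2*(x+2)^2)) (convex_Ici 1)
        (fun x hx => (md_aux_g_deriv (lt_of_lt_of_le one_pos hx)).continuousAt.continuousWithinAt)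
        (fun x hx => ?_) (fun x hx => ?_)
      · rw [interior_Ici] at hx
        exact (md_aux_g_deriv (lt_trans one_pos hx)).hasDerivWithinAt
      · rw [interior_Ici] at hx
        have := md_aux_phi_mono (Set.mem_Ioi.mpr one_pos) (Set.mem_Ioi.mpr (lt_trans one_pos hx)) hx.le
        simp only at this ⊢
        linarith [hphi1]
    have := hmono (Set.mem_Ici.mpr le_rfl) (Set.mem_Ici.mpr h1t) h1t
    rwa [hg1] at this
  · -- antitone on Ioc 0 1
    have hanti : AntitoneOn g (Set.Ioc 0 1) := by
      refine antitoneOn_of_hasDerivWithinAt_nonpos (f' := fun x => Real.log x - 3*(x-1)*(x+5)/(2*(x+2)^2)) (convex_Ioc 0 1)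
        (fun x hx => (md_aux_g_deriv hx.1).continuousAt.continuousWithinAt)
        (fun x hx => ?_) (fun x hx => ?_)
      · rw [interior_Ioc] at hx
        exact (md_aux_g_deriv hx.1).hasDerivWithinAt
      · rw [interior_Ioc] at hx
        have := md_aux_phi_mono (Set.mem_Ioi.mpr hx.1) (Set.mem_Ioi.mpr one_pos) hx.2.le
        simp only at this ⊢
        linarith [hphi1]
    have := hanti (Set.mem_Ioc.mpr ⟨ht, ht1⟩) (Set.mem_Ioc.mpr ⟨one_pos, le_rfl⟩) ht1
    rwa [hg1] at this

/-- pointwise: 3(a-b)²/(2(a+2b)) ≤ a log(a/b) - a + b -/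
lemma md_term_ineq {a b : ℝ} (ha : 0 < a) (hb : 0 < b) :
    3*(a-b)^2/(2*(a+2*b)) ≤ a * Real.log (a/b) - a + b := by
  have ht : 0 < a/b := div_pos ha hb
  have h := md_core_ineq ht
  have h2 := mul_le_mul_of_nonneg_left h hb.le
  have e1 : b * (a/b * Real.log (a/b) - a/b + 1) = a * Real.log (a/b) - a + b := by
    field_simp
  have e2 : b * (3*(a/b-1)^2/(2*(a/b+2))) = 3*(a-b)^2/(2*(a+2*b)) := by
    have hd : (a + 2*b) ≠ 0 := by positivity
    field_simp
  rw [e1, e2] at h2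
  exact h2

/-- Sum version: quadratic lower bound on KL. -/
lemma md_kl_quad_le {n : ℕ} {p q : Fin n → ℝ} (hp : ∀ y, 0 < p y) (hq : ∀ y, 0 < q y)
    (hps : ∑ y, p y = 1) (hqs : ∑ y, q y = 1) :
    ∑ y, 3*(p y - q y)^2/(2*(p y + 2*q y)) ≤ ∑ y, p y * Real.log (p y / q y) := by
  have h : ∑ y, 3*(p y - q y)^2/(2*(p y + 2*q y))
      ≤ ∑ y, (p y * Real.log (p y / q y) - p y + q y) :=
    Finset.sum_le_sum fun y _ => md_term_ineq (hp y) (hq y)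
  calc ∑ y, 3*(p y - q y)^2/(2*(p y + 2*q y))
      ≤ ∑ y, (p y * Real.log (p y / q y) - p y + q y) := h
    _ = ∑ y, p y * Real.log (p y / q y) := by
        rw [Finset.sum_add_distrib, Finset.sum_sub_distrib, hps, hqs]; ring

lemma md_kl_nonneg {n : ℕ} {p q : Fin n → ℝ} (hp : ∀ y, 0 < p y) (hq : ∀ y, 0 < q y)
    (hps : ∑ y, p y = 1) (hqs : ∑ y, q y = 1) :
    0 ≤ ∑ y, p y * Real.log (p y / q y) := by
  refine le_trans ?_ (md_kl_quad_le hp hq hps hqs)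
  exact Finset.sum_nonneg fun y _ =>
    div_nonneg (by positivity) (by have := hp y; have := hq y; linarith)

lemma md_kl_nonpos_eq {n : ℕ} {p q : Fin n → ℝ} (hp : ∀ y, 0 < p y) (hq : ∀ y, 0 < q y)
    (hps : ∑ y, p y = 1) (hqs : ∑ y, q y = 1)
    (h : ∑ y, p y * Real.log (p y / q y) ≤ 0) : ∀ y, p y = q y := by
  have h2 := md_kl_quad_le hp hq hps hqs
  have hnn : ∀ y ∈ Finset.univ, 0 ≤ 3*(p y - q y)^2/(2*(p y + 2*q y)) := fun y _ =>
    div_nonneg (by positivity) (by have := hp y; have := hq y; linarith)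
  have h3 : ∑ y, 3*(p y - q y)^2/(2*(p y + 2*q y)) = 0 :=
    le_antisymm (le_trans h2 h) (Finset.sum_nonneg hnn)
  intro y
  have h4 := (Finset.sum_eq_zero_iff_of_nonneg hnn).mp h3 y (mem_univ y)
  have hd : 0 < 2*(p y + 2*q y) := by have := hp y; have := hq y; linarith
  rcases div_eq_zero_iff.mp h4 with h5 | h5
  · nlinarith [sq_nonneg (p y - q y)]
  · linarith

/-- Pinsker's inequality (finite, discrete). -/
lemma md_pinsker {n : ℕ} {p q : Fin n → ℝ} (hp : ∀ y, 0 < p y) (hq : ∀ y, 0 < q y)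
    (hps : ∑ y, p y = 1) (hqs : ∑ y, q y = 1) :
    (∑ y, |p y - q y|)^2 ≤ 2 * ∑ y, p y * Real.log (p y / q y) := by
  set f : Fin n → ℝ := fun y => Real.sqrt (3*(p y - q y)^2/(2*(p y + 2*q y))) with hf
  set g : Fin n → ℝ := fun y => Real.sqrt (2*(p y + 2*q y)/3) with hgdef
  have hfg : ∀ y, f y * g y = |p y - q y| := by
    intro y
    have hd : 0 < p y + 2*q y := by have := hp y; have := hq y; linarith
    rw [hf, hgdef]
    rw [← Real.sqrt_mul (by positivity)]
    rw [show 3*(p y - q y)^2/(2*(p y + 2*q y)) * (2*(p y + 2*q y)/3) = (p y - q y)^2 by field_simp; exact mul_div_cancel_right₀ _ (by linarith)]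
    exact Real.sqrt_sq_eq_abs _
  have hCS := Finset.sum_mul_sq_le_sq_mul_sq Finset.univ f g
  have hf2 : ∀ y, f y ^ 2 = 3*(p y - q y)^2/(2*(p y + 2*q y)) := by
    intro y
    have hd : 0 < p y + 2*q y := by have := hp y; have := hq y; linarith
    rw [hf, Real.sq_sqrt (by positivity)]
  have hg2 : ∀ y, g y ^ 2 = 2*(p y + 2*q y)/3 := by
    intro y
    have hd : 0 < p y + 2*q y := by have := hp y; have := hq y; linarith
    rw [hgdef, Real.sq_sqrt (by positivity)]
  have hsumg : ∑ y, g y ^ 2 = 2 := by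
    simp_rw [hg2]
    rw [show (fun y => 2*(p y + 2*q y)/3) = (fun y => 2/3 * p y + 4/3 * q y) from funext fun y => by ring]
    rw [Finset.sum_add_distrib, ← Finset.mul_sum, ← Finset.mul_sum, hps, hqs]
    norm_num
  calc (∑ y, |p y - q y|)^2 = (∑ y, f y * g y)^2 := by simp_rw [hfg]
    _ ≤ (∑ y, f y ^ 2) * ∑ y, g y ^ 2 := hCS
    _ = (∑ y, 3*(p y - q y)^2/(2*(p y + 2*q y))) * 2 := by rw [hsumg]; congr 1; exact Finset.sum_congr rfl fun y _ => hf2 y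
    _ ≤ (∑ y, p y * Real.log (p y / q y)) * 2 := by
        have := md_kl_quad_le hp hq hps hqs; nlinarith
    _ = 2 * ∑ y, p y * Real.log (p y / q y) := by ring

/-- If `r` maximizes `p ↦ ⟨G,p⟩ − KL(p‖w)` over the simplex, then `r` is the Gibbs
distribution: `log(r y / w y) = G y − log Z`. -/
lemma md_argmax_gibbs {n : ℕ} (w G r : Fin n → ℝ) (hw : ∀ y, 0 < w y)
    (hr : ∀ y, 0 < r y) (hrs : ∑ y, r y = 1)
    (hmax : ∀ p ∈ stdSimplex ℝ (Fin n),
      (∑ y, G y * p y) - (∑ y, p y * Real.log (p y / w y))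
        ≤ (∑ y, G y * r y) - (∑ y, r y * Real.log (r y / w y))) :
    ∀ y, Real.log (r y / w y) = G y - Real.log (∑ z, w z * Real.exp (G z)) := by
  have hne : (Finset.univ : Finset (Fin n)).Nonempty := by
    rcases (Finset.univ : Finset (Fin n)).eq_empty_or_nonempty with h | h
    · rw [h] at hrs; simp at hrs
    · exact h
  set Z : ℝ := ∑ z, w z * Real.exp (G z) with hZ
  have hZpos : 0 < Z := Finset.sum_pos (fun z _ => mul_pos (hw z) (Real.exp_pos _)) hne
  set ν : Fin n → ℝ := fun y => w y * Real.exp (G y) / Z with hν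
  have hνpos : ∀ y, 0 < ν y := fun y => div_pos (mul_pos (hw y) (Real.exp_pos _)) hZpos
  have hνsum : ∑ y, ν y = 1 := by
    rw [hν, ← Finset.sum_div]
    exact div_self hZpos.ne'
  have hνmem : ν ∈ stdSimplex ℝ (Fin n) := ⟨fun y => (hνpos y).le, hνsum⟩
  -- identity: for positive p with sum 1,
  -- ⟨G,p⟩ − KL(p‖w) = log Z − KL(p‖ν)
  have hid : ∀ p : Fin n → ℝ, (∀ y, 0 < p y) → (∑ y, p y = 1) →
      (∑ y, G y * p y) - (∑ y, p y * Real.log (p y / w y))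
        = Real.log Z - ∑ y, p y * Real.log (p y / ν y) := by
    intro p hp hps
    have key : ∀ y, p y * Real.log (p y / ν y)
        = p y * Real.log (p y / w y) - G y * p y + Real.log Z * p y := by
      intro y
      have h1 : Real.log (ν y) = Real.log (w y) + G y - Real.log Z := by
        rw [hν]
        rw [Real.log_div (mul_pos (hw y) (Real.exp_pos _)).ne' hZpos.ne', Real.log_mul (hw y).ne' (Real.exp_pos _).ne',
          Real.log_exp]
      rw [Real.log_div (hp y).ne' (hνpos y).ne', Real.log_div (hp y).ne' (hw y).ne', h1]
      ring
    rw [Finset.sum_congr rfl fun y _ => key y]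
    rw [Finset.sum_add_distrib, Finset.sum_sub_distrib, ← Finset.mul_sum, hps]
    ring
  have h1 := hmax ν hνmem
  rw [hid ν hνpos hνsum, hid r hr hrs] at h1
  -- KL(ν‖ν) = 0
  have h2 : ∑ y, ν y * Real.log (ν y / ν y) = 0 := by
    apply Finset.sum_eq_zero
    intro y _
    rw [div_self (hνpos y).ne', Real.log_one, mul_zero]
  rw [h2] at h1
  have h3 : ∑ y, r y * Real.log (r y / ν y) ≤ 0 := by linarith
  have h4 := md_kl_nonpos_eq hr hνpos hrs hνsum h3
  intro y
  rw [h4 y, hν]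
  rw [show w y * Real.exp (G y) / Z / w y = Real.exp (G y) / Z by
    rw [div_div, mul_comm (w y) (Real.exp (G y)), mul_comm Z (w y), ← div_div,
      mul_div_assoc, div_self (hw y).ne', mul_one]]
  rw [Real.log_div (Real.exp_pos _).ne' hZpos.ne', Real.log_exp]

end MDAux

/-- linear last-iterate convergence of entropic mirror descent on
the `τ`-KL-regularized preference game. If `μ*` is the (unique symmetric) Nash
equilibrium of `J_τ(π₁,π₂,π_ref) = π₁ᵀAπ₂ − 1/2 − τKL(π₁‖π_ref) + τKL(π₂‖π_ref)`,
the iterates satisfy `μ¹ = π_ref` and `μ^{k+1} = Prox(μ^k, η·F(μ^k))` with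
`F(μ) = Aμ − τ(log(μ/π_ref) + 1)`, and `0 < η ≤ τ/(τ² + 1/2)`, then for all
`k ≥ 1`, `KL(μ*‖μ^{k+1}) ≤ (1 − ητ/2)·KL(μ*‖μ^k)`. -/
theorem mirror_descent_linear_convergence_regularized_game {n : ℕ}
    (A : Fin n → Fin n → ℝ)
    (hA01 : ∀ i j, A i j ∈ Set.Icc (0:ℝ) 1)
    (hApref : ∀ i j, A i j + A j i = 1)
    (KL : (Fin n → ℝ) → (Fin n → ℝ) → ℝ)
    (hKL : ∀ p q, KL p q = ∑ y, p y * Real.log (p y / q y))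
    (τ η : ℝ) (hτ : 0 < τ) (hη : 0 < η) (hηle : η ≤ τ / (τ^2 + 1/2))
    (πref : Fin n → ℝ) (hπref : πref ∈ stdSimplex ℝ (Fin n))
    (hπref_pos : ∀ y, 0 < πref y)
    -- F(μ) = Aμ − τ(log(μ/π_ref) + 1)
    (F : (Fin n → ℝ) → Fin n → ℝ)
    (hF : ∀ μ y, F μ y = (∑ j, A y j * μ j) - τ * (Real.log (μ y / πref y) + 1))
    -- μ* is a Nash equilibrium of the regularized game
    (μstar : Fin n → ℝ) (hμstar : μstar ∈ stdSimplex ℝ (Fin n))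
    (hμstar_pos : ∀ y, 0 < μstar y)
    (hNashMax : ∀ π ∈ stdSimplex ℝ (Fin n),
      (∑ i, ∑ j, π i * A i j * μstar j) - τ * KL π πref
        ≤ (∑ i, ∑ j, μstar i * A i j * μstar j) - τ * KL μstar πref)
    (hNashMin : ∀ π ∈ stdSimplex ℝ (Fin n),
      (∑ i, ∑ j, μstar i * A i j * μstar j) + τ * KL μstar πref
        ≤ (∑ i, ∑ j, μstar i * A i j * π j) + τ * KL π πref)
    -- mirror descent iterates
    (μ : ℕ → Fin n → ℝ)
    (hμmem : ∀ k, μ k ∈ stdSimplex ℝ (Fin n))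
    (hμpos : ∀ k y, 0 < μ k y)
    (hinit : μ 1 = πref)
    (hupdate : ∀ k ≥ 1, ∀ p ∈ stdSimplex ℝ (Fin n),
      (∑ y, η * F (μ k) y * p y) - KL p (μ k)
        ≤ (∑ y, η * F (μ k) y * μ (k+1) y) - KL (μ (k+1)) (μ k)) :
    ∀ k ≥ 1, KL μstar (μ (k+1)) ≤ (1 - η * τ / 2) * KL μstar (μ k) := by
  intro k hk
  -- abbreviations
  have hq : ∀ y, 0 < μ k y := hμpos k
  have hr : ∀ y, 0 < μ (k+1) y := hμpos (k+1)
  have hs : ∀ y, 0 < μstar y := hμstar_pos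
  have hqs : ∑ y, μ k y = 1 := (hμmem k).2
  have hrs : ∑ y, μ (k+1) y = 1 := (hμmem (k+1)).2
  have hss : ∑ y, μstar y = 1 := hμstar.2
  -- conversion of KL sums to log-difference form
  have hLconv : ∀ (a b : Fin n → ℝ), (∀ y, 0 < a y) → (∀ y, 0 < b y) →
      ∑ y, a y * Real.log (a y / b y) = ∑ y, a y * (Real.log (a y) - Real.log (b y)) :=
    fun a b ha hb => Finset.sum_congr rfl fun y _ => by
      rw [Real.log_div (ha y).ne' (hb y).ne']
  -- step A: characterize the update as a Gibbs distribution
  have hup : ∀ p ∈ stdSimplex ℝ (Fin n),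
      (∑ y, (η * F (μ k) y) * p y) - (∑ y, p y * Real.log (p y / μ k y))
        ≤ (∑ y, (η * F (μ k) y) * μ (k+1) y)
          - (∑ y, μ (k+1) y * Real.log (μ (k+1) y / μ k y)) := by
    intro p hp
    have h := hupdate k hk p hp
    rw [hKL, hKL] at h
    exact h
  have hE := md_argmax_gibbs (μ k) (fun y => η * F (μ k) y) (μ (k+1)) hq hr hrs hup
  set C : ℝ := Real.log (∑ z, μ k z * Real.exp (η * F (μ k) z)) with hC
  have hE' : ∀ y, Real.log (μ (k+1) y) - Real.log (μ k y) = η * F (μ k) y - C := by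
    intro y
    rw [← Real.log_div (hr y).ne' (hq y).ne']
    exact hE y
  -- step B: characterize μstar as a Gibbs distribution; F μstar is constant
  set g : Fin n → ℝ := fun i => ∑ j, A i j * μstar j with hg
  have hNmax' : ∀ p ∈ stdSimplex ℝ (Fin n),
      (∑ y, (g y / τ) * p y) - (∑ y, p y * Real.log (p y / πref y))
        ≤ (∑ y, (g y / τ) * μstar y) - (∑ y, μstar y * Real.log (μstar y / πref y)) := by
    intro p hp
    have h0 := hNashMax p hp
    rw [hKL, hKL] at h0
    have e1 : ∀ π : Fin n → ℝ, ∑ i, ∑ j, π i * A i j * μstar j = ∑ i, g i * π i := by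
      intro π
      refine Finset.sum_congr rfl fun i _ => ?_
      rw [hg, Finset.sum_mul]
      exact Finset.sum_congr rfl fun j _ => by ring
    rw [e1 p, e1 μstar] at h0
    have e2 : ∀ π : Fin n → ℝ, ∑ y, (g y / τ) * π y = (∑ y, g y * π y) / τ := by
      intro π
      rw [Finset.sum_div]
      exact Finset.sum_congr rfl fun y _ => by ring
    rw [e2 p, e2 μstar]
    rw [sub_le_sub_iff, div_add' _ _ _ hτ.ne', div_add' _ _ _ hτ.ne']
    exact (div_le_div_iff_of_pos_right hτ).mpr (by linarith)
  have hEs := md_argmax_gibbs πref (fun y => g y / τ) μstar hπref_pos hs hss hNmax'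
  set Cs : ℝ := Real.log (∑ z, πref z * Real.exp (g z / τ)) with hCs
  have hFs : ∀ y, F μstar y = τ * Cs - τ := by
    intro y
    rw [hF]
    have h1 : (∑ j, A y j * μstar j) = g y := rfl
    rw [h1, hEs y]
    field_simp
    ring
  -- rewrite the goal in log-difference form
  rw [hKL, hKL, hLconv μstar (μ (k+1)) hs hr, hLconv μstar (μ k) hs hq]
  set Lsr : ℝ := ∑ y, μstar y * (Real.log (μstar y) - Real.log (μ (k+1) y)) with hLsr
  set Lsq : ℝ := ∑ y, μstar y * (Real.log (μstar y) - Real.log (μ k y)) with hLsq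
  set Lrq : ℝ := ∑ y, μ (k+1) y * (Real.log (μ (k+1) y) - Real.log (μ k y)) with hLrq
  set Lrs : ℝ := ∑ y, μ (k+1) y * (Real.log (μ (k+1) y) - Real.log (μstar y)) with hLrs
  set S : ℝ := ∑ y, (μ (k+1) y - μ k y) * (∑ j, A y j * (μ k j - μstar j)) with hSdef
  set X : ℝ := ∑ j, |μ k j - μstar j| with hXdef
  set U : ℝ := ∑ y, |μ (k+1) y - μ k y| with hUdef
  clear_value Lsr Lsq Lrq Lrs S X U
  -- nonnegativity of the KL quantities
  have hLsq0 : 0 ≤ Lsq := by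
    rw [hLsq, ← hLconv μstar (μ k) hs hq]; exact md_kl_nonneg hs hq hss hqs
  have hLrq0 : 0 ≤ Lrq := by
    rw [hLrq, ← hLconv (μ (k+1)) (μ k) hr hq]; exact md_kl_nonneg hr hq hrs hqs
  have hLrs0 : 0 ≤ Lrs := by
    rw [hLrs, ← hLconv (μ (k+1)) μstar hr hs]; exact md_kl_nonneg hr hs hrs hss
  -- zero-sum facts
  have hx0 : ∑ j, (μ k j - μstar j) = 0 := by
    rw [Finset.sum_sub_distrib, hqs, hss]; ring
  have hrs0 : ∑ y, (μ (k+1) y - μstar y) = 0 := by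
    rw [Finset.sum_sub_distrib, hrs, hss]; ring
  -- three-point identity
  have hI1 : Lsr = Lsq - Lrq
      + ∑ y, (μ (k+1) y - μstar y) * (Real.log (μ (k+1) y) - Real.log (μ k y)) := by
    rw [hLsr, hLsq, hLrq, ← Finset.sum_sub_distrib, ← Finset.sum_add_distrib]
    exact Finset.sum_congr rfl fun y _ => by ring
  -- plug in the update rule
  have hsum1 : ∑ y, (μ (k+1) y - μstar y) * (Real.log (μ (k+1) y) - Real.log (μ k y))
      = (∑ y, (μ (k+1) y - μstar y) * (η * F (μ k) y))
        - C * ∑ y, (μ (k+1) y - μstar y) := by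
    rw [Finset.mul_sum, ← Finset.sum_sub_distrib]
    refine Finset.sum_congr rfl fun y _ => ?_
    rw [hE' y]; ring
  have hsum1' : ∑ y, (μ (k+1) y - μstar y) * (Real.log (μ (k+1) y) - Real.log (μ k y))
      = ∑ y, (μ (k+1) y - μstar y) * (η * F (μ k) y) := by
    rw [hsum1, hrs0, mul_zero, sub_zero]
  -- subtract the (constant) equilibrium operator
  have hsum2 : ∑ y, (μ (k+1) y - μstar y) * (η * F (μ k) y)
      = η * (∑ y, (μ (k+1) y - μstar y) * (F (μ k) y - F μstar y))
        + (η * (τ * Cs - τ)) * ∑ y, (μ (k+1) y - μstar y) := by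
    rw [Finset.mul_sum, Finset.mul_sum, ← Finset.sum_add_distrib]
    refine Finset.sum_congr rfl fun y _ => ?_
    rw [hFs y]; ring
  have hsum2' : ∑ y, (μ (k+1) y - μstar y) * (η * F (μ k) y)
      = η * ∑ y, (μ (k+1) y - μstar y) * (F (μ k) y - F μstar y) := by
    rw [hsum2, hrs0, mul_zero, add_zero]
  -- operator difference
  have hFdiff : ∀ y, F (μ k) y - F μstar y
      = (∑ j, A y j * (μ k j - μstar j))
        - τ * (Real.log (μ k y) - Real.log (μstar y)) := by
    intro y
    rw [hF, hF, Real.log_div (hq y).ne' (hπref_pos y).ne',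
      Real.log_div (hs y).ne' (hπref_pos y).ne']
    rw [show ∑ j, A y j * (μ k j - μstar j)
        = (∑ j, A y j * μ k j) - ∑ j, A y j * μstar j by
      rw [← Finset.sum_sub_distrib]; exact Finset.sum_congr rfl fun j _ => by ring]
    ring
  have hsum3 : ∑ y, (μ (k+1) y - μstar y) * (F (μ k) y - F μstar y)
      = (∑ y, (μ (k+1) y - μstar y) * (∑ j, A y j * (μ k j - μstar j)))
        - τ * ∑ y, (μ (k+1) y - μstar y) * (Real.log (μ k y) - Real.log (μstar y)) := by
    rw [Finset.mul_sum, ← Finset.sum_sub_distrib]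
    refine Finset.sum_congr rfl fun y _ => ?_
    rw [hFdiff y]; ring
  -- split the bilinear term
  have hSAsplit : ∑ y, (μ (k+1) y - μstar y) * (∑ j, A y j * (μ k j - μstar j))
      = S + ∑ y, (μ k y - μstar y) * (∑ j, A y j * (μ k j - μstar j)) := by
    rw [hSdef, ← Finset.sum_add_distrib]
    exact Finset.sum_congr rfl fun y _ => by ring
  -- the quadratic form vanishes
  have hQ : ∑ y, (μ k y - μstar y) * (∑ j, A y j * (μ k j - μstar j)) = 0 := by
    have e1 : ∑ y, (μ k y - μstar y) * (∑ j, A y j * (μ k j - μstar j))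
        = ∑ y, ∑ j, (μ k y - μstar y) * (A y j * (μ k j - μstar j)) :=
      Finset.sum_congr rfl fun y _ => Finset.mul_sum _ _ _
    have e2 : ∑ y, ∑ j, (μ k y - μstar y) * (A y j * (μ k j - μstar j))
        = ∑ y, ∑ j, (μ k j - μstar j) * (A j y * (μ k y - μstar y)) :=
      Finset.sum_comm
    have e3 : (∑ y, ∑ j, (μ k y - μstar y) * (A y j * (μ k j - μstar j)))
        + ∑ y, ∑ j, (μ k j - μstar j) * (A j y * (μ k y - μstar y))
        = ∑ y, ∑ j, (μ k y - μstar y) * (μ k j - μstar j) := by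
      rw [← Finset.sum_add_distrib]
      refine Finset.sum_congr rfl fun y _ => ?_
      rw [← Finset.sum_add_distrib]
      refine Finset.sum_congr rfl fun j _ => ?_
      linear_combination (μ k y - μstar y) * (μ k j - μstar j) * hApref y j
    have e4 : ∑ y, ∑ j, (μ k y - μstar y) * (μ k j - μstar j) = 0 := by
      have : ∀ y : Fin n, ∑ j, (μ k y - μstar y) * (μ k j - μstar j)
          = (μ k y - μstar y) * ∑ j, (μ k j - μstar j) :=
        fun y => (Finset.mul_sum _ _ _).symm
      rw [Finset.sum_congr rfl fun y _ => this y]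
      simp [hx0]
    linarith [e1, e2, e3, e4]
  -- decompose the log term into KLs
  have hSL : ∑ y, (μ (k+1) y - μstar y) * (Real.log (μ k y) - Real.log (μstar y))
      = Lrs - Lrq + Lsq := by
    rw [hLrs, hLrq, hLsq, ← Finset.sum_sub_distrib, ← Finset.sum_add_distrib]
    exact Finset.sum_congr rfl fun y _ => by ring
  -- master identity
  have hkey : Lsr = (1 - η*τ) * Lsq - (1 - η*τ) * Lrq - η*τ*Lrs + η * S := by
    rw [hI1, hsum1', hsum2', hsum3, hSAsplit, hQ, hSL]; ring
  -- bound the cross term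
  have hAbound : ∀ y, |∑ j, A y j * (μ k j - μstar j)| ≤ X / 2 := by
    intro y
    rw [abs_le]
    constructor
    · have h1 : ∑ j, ((μ k j - μstar j) - |μ k j - μstar j|)/2
          ≤ ∑ j, A y j * (μ k j - μstar j) := by
        refine Finset.sum_le_sum fun j _ => ?_
        have h01 := hA01 y j
        rcases abs_cases (μ k j - μstar j) with ⟨he, hsgn⟩ | ⟨he, hsgn⟩ <;> rw [he]
        · linarith only [mul_nonneg h01.1 hsgn]
        · linarith only [mul_nonneg (sub_nonneg.2 h01.2) (neg_nonneg.2 hsgn.le)]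
      have h2 : ∑ j, ((μ k j - μstar j) - |μ k j - μstar j|)/2 = -(X/2) := by
        rw [← Finset.sum_div, Finset.sum_sub_distrib, hx0, hXdef]; ring
      linarith
    · have h1 : ∑ j, A y j * (μ k j - μstar j)
          ≤ ∑ j, ((μ k j - μstar j) + |μ k j - μstar j|)/2 := by
        refine Finset.sum_le_sum fun j _ => ?_
        have h01 := hA01 y j
        rcases abs_cases (μ k j - μstar j) with ⟨he, hsgn⟩ | ⟨he, hsgn⟩ <;> rw [he]
        · linarith only [mul_le_mul_of_nonneg_right h01.2 hsgn]
        · linarith only [mul_nonneg h01.1 (neg_nonneg.2 hsgn.le)]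
      have h2 : ∑ j, ((μ k j - μstar j) + |μ k j - μstar j|)/2 = X/2 := by
        rw [← Finset.sum_div, Finset.sum_add_distrib, hx0, hXdef]; ring
      linarith
  have hX : S ≤ U * (X/2) := by
    rw [hSdef, hUdef, Finset.sum_mul]
    refine Finset.sum_le_sum fun y _ => ?_
    calc (μ (k+1) y - μ k y) * (∑ j, A y j * (μ k j - μstar j))
        ≤ |(μ (k+1) y - μ k y) * (∑ j, A y j * (μ k j - μstar j))| := le_abs_self _
      _ = |μ (k+1) y - μ k y| * |∑ j, A y j * (μ k j - μstar j)| := abs_mul _ _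
      _ ≤ |μ (k+1) y - μ k y| * (X/2) :=
          mul_le_mul_of_nonneg_left (hAbound y) (abs_nonneg _)
  -- Pinsker bounds
  have hXp : X^2 ≤ 2 * Lsq := by
    have h := md_pinsker hs hq hss hqs
    rw [hLconv μstar (μ k) hs hq, ← hLsq] at h
    have e : X = ∑ j, |μstar j - μ k j| := by
      rw [hXdef]; exact Finset.sum_congr rfl fun j _ => abs_sub_comm _ _
    rw [e]; exact h
  have hUp : U^2 ≤ 2 * Lrq := by
    have h := md_pinsker hr hq hrs hqs
    rw [hLconv (μ (k+1)) (μ k) hr hq, ← hLrq] at h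
    rw [hUdef]; exact h
  -- step-size arithmetic
  have hηs : η * (τ^2 + 1/2) ≤ τ := by
    have h2 : (0:ℝ) < τ^2 + 1/2 := by positivity
    calc η * (τ^2+1/2) ≤ (τ/(τ^2+1/2)) * (τ^2+1/2) :=
          mul_le_mul_of_nonneg_right hηle h2.le
      _ = τ := div_mul_cancel₀ _ h2.ne'
  have hlam : 0 < 1 - η * τ := by
    by_contra hcon
    push_neg at hcon
    have hc1 : 1 ≤ η * τ := by linarith only [hcon]
    have h1 := mul_le_mul_of_nonneg_right hηs hτ.le
    have h2 := mul_le_mul_of_nonneg_right hc1 (sq_nonneg τ)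
    have h3 := mul_pos hη hτ
    linarith only [h1, h2, h3]
  have hcoef : 2 * η^2 ≤ 4 * (1 - η*τ) * (η*τ) := by
    linarith only [mul_le_mul_of_nonneg_right hηs hη.le]
  -- core bound on the cross term
  have hcore : η * S ≤ (η*τ/2) * Lsq + (1 - η*τ) * Lrq := by
    have h8 : (0:ℝ) < 8 * (1 - η*τ) := by linarith
    refine le_of_mul_le_mul_left ?_ h8
    have b1 : η * S ≤ η * (U * (X/2)) := mul_le_mul_of_nonneg_left hX hη.le
    have c1 : 8*(1-η*τ)*(η*S) ≤ 8*(1-η*τ)*(η*(U*(X/2))) :=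
      mul_le_mul_of_nonneg_left b1 (by linarith)
    have b2 : 8*(1-η*τ)*(η*(U*(X/2))) ≤ η^2 * X^2 + 4*(1-η*τ)^2 * U^2 := by
      linarith only [sq_nonneg (η*X - 2*(1-η*τ)*U)]
    have b3 : η^2 * X^2 ≤ η^2 * (2*Lsq) := mul_le_mul_of_nonneg_left hXp (by positivity)
    have b4 : 4*(1-η*τ)^2*U^2 ≤ 4*(1-η*τ)^2*(2*Lrq) :=
      mul_le_mul_of_nonneg_left hUp (by positivity)
    have b5 : (2*η^2) * Lsq ≤ (4*(1-η*τ)*(η*τ)) * Lsq :=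
      mul_le_mul_of_nonneg_right hcoef hLsq0
    linarith only [c1, b2, b3, b4, b5]
  -- conclude
  have hLrsnn : 0 ≤ η*τ*Lrs := mul_nonneg (mul_nonneg hη.le hτ.le) hLrs0
  linarith only [hkey, hcore, hLrsnn, hLsq0]
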